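/- Let A ∈ ℂ^{n×n} with Ind A = 1 and rank A² = rank A = r ≤ n. Then the entries a^g_{ij} of the group inverse A^g satisfy, for all i, j ∈ {1,…,n}: a^g_{ij} = ( Σ_{α ∈ I_{r,n}{j}} |((A²_{j.}(a_{i.}))_α^α| ) / ( Σ_{α ∈ I_{r,n}} |((A²))_α^α| ), and also a^g_{ij} = ( Σ_{β ∈ J_{r,n}{i}} |((A²_{.i}(a_{.j}))_β^β| ) / ( Σ_{β ∈ J_{r,n}} |((A²))_β^β| ), where a_{i.} and a_{.j} denote the i-th row and j-th column of A. -/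

import Mathlib

open Matrix

/-- The principal minor of a square matrix `M` determined by the subset `β` of indices. -/
noncomputable def Matrix.pminor {n : Type*} [DecidableEq n] [Fintype n]
    (M : Matrix n n ℂ) (β : Finset n) : ℂ :=
  (M.submatrix (fun i : {x // x ∈ β} => i.1) (fun i : {x // x ∈ β} => i.1)).det

open Polynomial

section Aux

variable {ι : Type*} [Fintype ι] [DecidableEq ι]

/-- det of a matrix whose rows on `s` are identity rows equals the complementary principal
minor. -/
lemma det_piecewise_one' {S : Type*} [CommRing S] (M : Matrix ι ι S) (s : Finset ι) :
    Matrix.det (Matrix.of (s.piecewise (1 : Matrix ι ι S) M)) =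
      Matrix.det (M.submatrix (fun x : {x // x ∉ s} => x.1) (fun x : {x // x ∉ s} => x.1)) := by
  classical
  set P : Matrix ι ι S := Matrix.of (s.piecewise (1 : Matrix ι ι S) M) with hP
  have he : Matrix.det (P.submatrix (Equiv.sumCompl (· ∈ s)) (Equiv.sumCompl (· ∈ s))) = P.det :=
    Matrix.det_submatrix_equiv_self _ _
  have hblock : P.submatrix (Equiv.sumCompl (· ∈ s)) (Equiv.sumCompl (· ∈ s)) =
      Matrix.fromBlocks 1 0
        (Matrix.of fun (x : {x // x ∉ s}) (y : {x // x ∈ s}) => M x.1 y.1)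
        (M.submatrix (fun x : {x // x ∉ s} => x.1) (fun x : {x // x ∉ s} => x.1)) := by
    ext a b
    rcases a with a | a <;> rcases b with b | b <;>
      simp [hP, Finset.piecewise, a.2, Matrix.one_apply, Matrix.fromBlocks]
    · intro h; exact absurd (h ▸ a.2) b.2
  rw [← he, hblock, Matrix.det_fromBlocks_zero₁₂, Matrix.det_one, one_mul]

lemma det_sub_compl {S : Type*} [CommRing S] (M : Matrix ι ι S) (s : Finset ι) :
    Matrix.det (M.submatrix (fun x : {x // x ∉ s} => x.1) (fun x : {x // x ∉ s} => x.1)) =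
      Matrix.det (M.submatrix (fun x : {x // x ∈ sᶜ} => x.1) (fun x : {x // x ∈ sᶜ} => x.1)) := by
  classical
  let e : {x // x ∈ sᶜ} ≃ {x // x ∉ s} := Equiv.subtypeEquivRight (fun x => Finset.mem_compl)
  rw [← Matrix.det_submatrix_equiv_self e, Matrix.submatrix_submatrix]
  rfl

/-- If the rows of `P` indexed by `s` all lie in a submodule of dimension `< s.card`,
then `det P = 0`. -/
lemma det_eq_zero_of_rows_mem (P : Matrix ι ι ℂ) (s : Finset ι) (V : Submodule ℂ (ι → ℂ))
    (hmem : ∀ i ∈ s, P i ∈ V) (hcard : Module.finrank ℂ V < s.card) : P.det = 0 := by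
  classical
  have hnli : ¬ LinearIndependent ℂ (fun i : {x // x ∈ s} => (⟨P i.1, hmem i.1 i.2⟩ : V)) := by
    intro h
    have := h.fintype_card_le_finrank
    rw [Fintype.card_coe] at this
    omega
  obtain ⟨g, hsum, i0, hg⟩ := Fintype.not_linearIndependent_iff.mp hnli
  rw [← Matrix.exists_vecMul_eq_zero_iff]
  refine ⟨fun x => if h : x ∈ s then g ⟨x, h⟩ else 0, ?_, ?_⟩
  · intro h0
    apply hg
    have := congrFun h0 i0.1
    simpa [i0.2] using this
  · have hsum' : ∀ k, (∑ i : {x // x ∈ s}, g i • P i.1 k) = 0 := by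
      intro k
      have := congrArg (fun v : V => (v : ι → ℂ) k) hsum
      simpa using this
    funext k
    have h1 : (∑ x : ι, (if h : x ∈ s then g ⟨x, h⟩ else 0) * P x k)
        = ∑ x ∈ s, (if h : x ∈ s then g ⟨x, h⟩ else 0) * P x k := by
      refine (Finset.sum_subset (Finset.subset_univ s) ?_).symm
      intro x _ hx
      simp [hx]
    have h2 : (∑ x ∈ s, (if h : x ∈ s then g ⟨x, h⟩ else 0) * P x k)
        = ∑ i : {x // x ∈ s}, g i • P i.1 k := by
      rw [← Finset.sum_attach s (fun x => (if h : x ∈ s then g ⟨x, h⟩ else 0) * P x k)]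
      simp only [Finset.univ_eq_attach]
      refine Finset.sum_congr rfl ?_
      intro x _
      simp [x.2, smul_eq_mul]
    simp only [Matrix.vecMul, dotProduct]
    rw [h1, h2, hsum']
    rfl

lemma det_map_add_X_smul (M N : Matrix ι ι ℂ) :
    Matrix.det (M.map C + (Polynomial.X : ℂ[X]) • N.map C) =
      ∑ s : Finset ι, (Polynomial.X : ℂ[X]) ^ s.card *
        C (Matrix.det (Matrix.of (s.piecewise N M))) := by
  classical
  have h0 : M.map C + (Polynomial.X : ℂ[X]) • N.map C
      = ((Polynomial.X : ℂ[X]) • N.map C) + M.map C := add_comm _ _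
  have h : Matrix.det (((Polynomial.X : ℂ[X]) • N.map C) + M.map C)
      = ∑ s : Finset ι, Matrix.det
          (Matrix.of (s.piecewise ((Polynomial.X : ℂ[X]) • N.map C) (M.map C))) :=
    (Matrix.detRowAlternating :
      (ι → ℂ[X]) [⋀^ι]→ₗ[ℂ[X]] ℂ[X]).toMultilinearMap.map_add_univ
      ((Polynomial.X : ℂ[X]) • N.map C) (M.map C)
  rw [h0, h]
  refine Finset.sum_congr rfl ?_
  intro s _
  set base : ι → ι → ℂ[X] := s.piecewise (N.map C) (M.map C) with hbase
  have hsplit : (s.piecewise ((Polynomial.X : ℂ[X]) • N.map C) (M.map C) : ι → ι → ℂ[X])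
      = s.piecewise (fun i => (Polynomial.X : ℂ[X]) • base i) base := by
    funext i
    by_cases hi : i ∈ s
    · erw [Finset.piecewise_eq_of_mem _ _ _ hi, Finset.piecewise_eq_of_mem _ _ _ hi,
        hbase, Finset.piecewise_eq_of_mem _ _ _ hi]
      rfl
    · erw [Finset.piecewise_eq_of_notMem _ _ _ hi, Finset.piecewise_eq_of_notMem _ _ _ hi,
        hbase, Finset.piecewise_eq_of_notMem _ _ _ hi]
  have hps : Matrix.det (Matrix.of (s.piecewise
        (fun i => (Polynomial.X : ℂ[X]) • base i) base))
      = (∏ _i ∈ s, (Polynomial.X : ℂ[X])) • Matrix.det (Matrix.of base) :=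
    (Matrix.detRowAlternating :
      (ι → ℂ[X]) [⋀^ι]→ₗ[ℂ[X]] ℂ[X]).toMultilinearMap.map_piecewise_smul
      (fun _ => (Polynomial.X : ℂ[X])) base s
  rw [hsplit, hps, Finset.prod_const, smul_eq_mul]
  congr 1
  have hbm : (Matrix.of base : Matrix ι ι ℂ[X]) = (Matrix.of (s.piecewise N M)).map C := by
    ext i k
    by_cases hi : i ∈ s
    · erw [Matrix.map_apply, Matrix.of_apply, Matrix.of_apply, hbase,
        Finset.piecewise_eq_of_mem _ _ _ hi, Finset.piecewise_eq_of_mem _ _ _ hi]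
      rfl
    · erw [Matrix.map_apply, Matrix.of_apply, Matrix.of_apply, hbase,
        Finset.piecewise_eq_of_notMem _ _ _ hi, Finset.piecewise_eq_of_notMem _ _ _ hi]
      rfl
  rw [hbm]
  exact (RingHom.map_det C (Matrix.of (s.piecewise N M))).symm

lemma coeff_sum_X_pow_card (f : Finset ι → ℂ) (k : ℕ) :
    (∑ s : Finset ι, (Polynomial.X : ℂ[X]) ^ s.card * C (f s)).coeff k
      = ∑ s ∈ Finset.univ.filter (fun s : Finset ι => s.card = k), f s := by
  rw [Polynomial.finset_sum_coeff, Finset.sum_filter]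
  refine Finset.sum_congr rfl ?_
  intro s _
  rw [mul_comm, Polynomial.coeff_C_mul, Polynomial.coeff_X_pow]
  by_cases h : s.card = k
  · simp [h]
  · have h' : ¬ k = s.card := fun hh => h hh.symm
    simp [h, h']

lemma det_updateRow_eq_sum_adjugate {S : Type*} [CommRing S] (B : Matrix ι ι S) (j : ι)
    (c : ι → S) : (B.updateRow j c).det = ∑ l, c l * B.adjugate l j := by
  rw [← Matrix.det_transpose, ← Matrix.updateCol_transpose, ← Matrix.cramer_apply]
  have hc : c = ∑ l, c l • (Pi.single l (1 : S) : ι → S) := by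
    funext k
    simp [Pi.single_apply]
  conv_lhs => rw [hc]
  rw [map_sum, Finset.sum_apply]
  refine Finset.sum_congr rfl ?_
  intro l _
  rw [_root_.map_smul]
  show (c l • Bᵀ.cramer (Pi.single l 1)) j = c l * B.adjugate l j
  rw [Pi.smul_apply, smul_eq_mul]
  rfl

end Aux

section FinAux

variable {n r : ℕ}

lemma sum_filter_card_compl (hrn : r ≤ n) (f : Finset (Fin n) → ℂ)
    (p : Finset (Fin n) → Prop) [DecidablePred p] :
    ∑ s ∈ Finset.univ.filter (fun s : Finset (Fin n) => s.card = n - r ∧ p sᶜ), f sᶜ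
      = ∑ α ∈ (Finset.powersetCard r (Finset.univ : Finset (Fin n))).filter p, f α := by
  refine Finset.sum_nbij' (fun s => sᶜ) (fun α => αᶜ) ?_ ?_ ?_ ?_ ?_
  · intro s hs
    rw [Finset.mem_filter] at hs
    obtain ⟨-, hcard, hps⟩ := hs
    rw [Finset.mem_filter, Finset.mem_powersetCard_univ]
    refine ⟨?_, hps⟩
    rw [Finset.card_compl, hcard, Fintype.card_fin]
    omega
  · intro α hα
    rw [Finset.mem_filter, Finset.mem_powersetCard_univ] at hα
    obtain ⟨hcard, hpα⟩ := hα
    rw [Finset.mem_filter]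
    refine ⟨Finset.mem_univ _, ?_, ?_⟩
    · rw [Finset.card_compl, hcard, Fintype.card_fin]
    · rw [compl_compl]; exact hpα
  · intro s _; exact compl_compl s
  · intro α _; exact compl_compl α
  · intro s _; rfl

lemma sum_card_compl (hrn : r ≤ n) (f : Finset (Fin n) → ℂ) :
    ∑ s ∈ Finset.univ.filter (fun s : Finset (Fin n) => s.card = n - r), f sᶜ
      = ∑ α ∈ Finset.powersetCard r (Finset.univ : Finset (Fin n)), f α := by
  have h1 : (Finset.univ.filter (fun s : Finset (Fin n) => s.card = n - r))
      = (Finset.univ.filter (fun s : Finset (Fin n) => s.card = n - r ∧ (fun _ => True) sᶜ)) := by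
    simp
  have h2 : (Finset.powersetCard r (Finset.univ : Finset (Fin n)))
      = (Finset.powersetCard r (Finset.univ : Finset (Fin n))).filter (fun _ => True) := by
    simp
  rw [h1, h2]
  exact sum_filter_card_compl hrn f (fun _ => True)

/-- row space of a matrix -/
noncomputable def RS (M : Matrix (Fin n) (Fin n) ℂ) : Submodule ℂ (Fin n → ℂ) :=
  LinearMap.range M.vecMulLinear

lemma RS_eq (M : Matrix (Fin n) (Fin n) ℂ) : RS M = LinearMap.range Mᵀ.mulVecLin := by
  have : M.vecMulLinear = Mᵀ.mulVecLin := by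
    apply LinearMap.ext
    intro x
    simp [Matrix.mulVec_transpose]
  rw [RS, this]

lemma finrank_RS (M : Matrix (Fin n) (Fin n) ℂ) : Module.finrank ℂ (RS M) = M.rank := by
  rw [RS_eq]
  exact congrArg _ rfl |>.trans (M.rank_transpose ▸ rfl)

lemma row_mem_RS (M : Matrix (Fin n) (Fin n) ℂ) (l : Fin n) : M l ∈ RS M := by
  refine ⟨Pi.single l 1, ?_⟩
  funext k
  simp [Matrix.vecMul, dotProduct, Pi.single_apply]

lemma row_mul_mem_RS (W M : Matrix (Fin n) (Fin n) ℂ) (l : Fin n) : (W * M) l ∈ RS M := by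
  refine ⟨W l, ?_⟩
  funext k
  simp [Matrix.vecMul, dotProduct, Matrix.mul_apply]

lemma rank_one_sub_le (E : Matrix (Fin n) (Fin n) ℂ) (hE : E * E = E) :
    (1 - E).rank ≤ n - E.rank := by
  have hmul : E * (1 - E) = 0 := by rw [mul_sub, mul_one, hE, sub_self]
  have hle : LinearMap.range (1 - E).mulVecLin ≤ LinearMap.ker E.mulVecLin := by
    rintro x ⟨y, rfl⟩
    rw [LinearMap.mem_ker]
    show E *ᵥ ((1 - E) *ᵥ y) = 0
    rw [Matrix.mulVec_mulVec, hmul, Matrix.zero_mulVec]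
  have hrn : (1 - E).rank ≤ Module.finrank ℂ (LinearMap.ker E.mulVecLin) :=
    Submodule.finrank_mono hle
  have hker : Module.finrank ℂ (LinearMap.range E.mulVecLin)
      + Module.finrank ℂ (LinearMap.ker E.mulVecLin) = n := by
    rw [LinearMap.finrank_range_add_finrank_ker, Module.finrank_fintype_fun_eq_card,
      Fintype.card_fin]
  have : E.rank = Module.finrank ℂ (LinearMap.range E.mulVecLin) := rfl
  omega

/-- `det` of a submatrix vanishes when all rows lie in a small submodule. -/
lemma pminor_eq_zero_of_rows (N : Matrix (Fin n) (Fin n) ℂ) (V : Submodule ℂ (Fin n → ℂ))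
    (h : ∀ l, N l ∈ V) (α : Finset (Fin n)) (hc : Module.finrank ℂ V < α.card) :
    N.pminor α = 0 := by
  classical
  apply det_eq_zero_of_rows_mem _ Finset.univ
    (V.map (LinearMap.funLeft ℂ ℂ (fun x : {x // x ∈ α} => x.1)))
  · intro l _
    exact ⟨N l.1, h l.1, rfl⟩
  · refine lt_of_le_of_lt (Submodule.finrank_map_le _ _) ?_
    rwa [Finset.card_univ, Fintype.card_coe]

end FinAux

section Master

theorem master_row (n r : ℕ) (A G : Matrix (Fin n) (Fin n) ℂ)
    (hr2 : A.rank = r) (hrn : r ≤ n)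
    (h1 : A * G * A = A) (h2 : G * A * G = G) (h3 : A * G = G * A) (i j : Fin n) :
    G i j =
      (∑ α ∈ (Finset.powersetCard r (Finset.univ : Finset (Fin n))).filter
          (fun α => j ∈ α),
        ((A ^ 2).updateRow j (fun l => A i l)).pminor α) /
      (∑ α ∈ Finset.powersetCard r (Finset.univ : Finset (Fin n)),
        (A ^ 2).pminor α) := by
  classical
  have hAA : A ^ 2 = A * A := sq A
  rw [hAA]
  -- basic algebraic identities for the group inverse
  have hGA2 : G * (A * A) = A := by
    calc G * (A * A) = G * A * A := (mul_assoc _ _ _).symm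
      _ = A * G * A := by rw [← h3]
      _ = A := h1
  have hA2G : (A * A) * G = A := by
    calc (A * A) * G = A * (A * G) := mul_assoc _ _ _
      _ = A * (G * A) := by rw [h3]
      _ = A * G * A := (mul_assoc _ _ _).symm
      _ = A := h1
  have hGGA : G * G * A = G := by
    calc G * G * A = G * (G * A) := mul_assoc _ _ _
      _ = G * (A * G) := by rw [← h3]
      _ = G * A * G := (mul_assoc _ _ _).symm
      _ = G := h2
  have hG3A2 : (G * G * G) * (A * A) = G := by
    calc (G * G * G) * (A * A) = (G * G) * (G * (A * A)) := by
          rw [mul_assoc (G * G) G (A * A)]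
      _ = (G * G) * A := by rw [hGA2]
      _ = G := hGGA
  obtain ⟨E, hEdef⟩ : ∃ E : Matrix (Fin n) (Fin n) ℂ, E = A * G := ⟨_, rfl⟩
  have hEE : E * E = E := by
    rw [hEdef, ← mul_assoc, h1]
  have hEA : E * A = A := by rw [hEdef]; exact h1
  have hA2E : (A * A) * E = A * A := by
    calc (A * A) * E = (A * A) * (G * A) := by rw [hEdef, h3]
      _ = ((A * A) * G) * A := (mul_assoc _ _ _).symm
      _ = A * A := by rw [hA2G]
  have hEG2 : E * (G * G) = G * G := by
    calc E * (G * G) = (G * A) * (G * G) := by rw [hEdef, h3]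
      _ = ((G * A) * G) * G := (mul_assoc _ _ _).symm
      _ = G * G := by rw [h2]
  have hA2G2 : (A * A) * (G * G) = E := by
    calc (A * A) * (G * G) = ((A * A) * G) * G := (mul_assoc _ _ _).symm
      _ = A * G := by rw [hA2G]
      _ = E := hEdef.symm
  have hinv : (A * A + 1 - E) * (G * G + 1 - E) = 1 := by
    have expand : (A * A + 1 - E) * (G * G + 1 - E)
        = (A * A) * (G * G) + (A * A) - (A * A) * E + ((G * G) + 1 - E)
          - (E * (G * G) + E - E * E) := by
      noncomm_ring
    rw [expand, hA2G2, hA2E, hEG2, hEE]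
    abel
  -- rank facts
  have hrE : E.rank = r := by
    refine le_antisymm ?_ ?_
    · rw [hEdef, ← hr2]; exact Matrix.rank_mul_le_left A G
    · calc r = A.rank := hr2.symm
        _ = (E * A).rank := by rw [hEA]
        _ ≤ E.rank := Matrix.rank_mul_le_left E A
  have hVA2 : Module.finrank ℂ (RS (A * A)) ≤ r := by
    rw [finrank_RS, ← hr2]; exact Matrix.rank_mul_le_left A A
  have hVE : Module.finrank ℂ (RS E) ≤ r := by rw [finrank_RS, hrE]
  have hVF : Module.finrank ℂ (RS (1 - E)) ≤ n - r := by
    rw [finrank_RS]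
    have := rank_one_sub_le E hEE
    omega
  -- polynomial setup
  set D : Matrix (Fin n) (Fin n) ℂ := (1 : Matrix (Fin n) (Fin n) ℂ).updateRow j 0 with hD
  set B : Matrix (Fin n) (Fin n) ℂ[X] :=
    (A * A).map C + (Polynomial.X : ℂ[X]) • (1 : Matrix (Fin n) (Fin n) ℂ).map C with hB
  have hmap1 : ((1 : Matrix (Fin n) (Fin n) ℂ).map C) = (1 : Matrix (Fin n) (Fin n) ℂ[X]) :=
    Matrix.map_one _ (map_zero C) (map_one C)
  have hmapadd : ∀ P Q : Matrix (Fin n) (Fin n) ℂ, (P + Q).map C = P.map C + Q.map C := by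
    intro P Q; ext l k; simp [Matrix.map_apply, Matrix.add_apply]
  have hrowgen : ∀ c : Fin n → ℂ, B.updateRow j (fun l => C (c l))
      = ((A * A).updateRow j c).map C + (Polynomial.X : ℂ[X]) • D.map C := by
    intro c
    refine Matrix.ext fun l k => ?_
    by_cases hl : l = j
    · subst hl
      rw [Matrix.updateRow_self, Matrix.add_apply, Matrix.smul_apply, Matrix.map_apply,
        Matrix.map_apply, Matrix.updateRow_self, hD, Matrix.updateRow_self]
      show C (c k) = C (c k) + Polynomial.X • C ((0 : Fin n → ℂ) k)
      rw [Pi.zero_apply, map_zero, smul_zero, add_zero]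
    · rw [Matrix.updateRow_ne hl, Matrix.add_apply, Matrix.smul_apply, Matrix.map_apply,
        Matrix.map_apply, Matrix.updateRow_ne hl, hD, Matrix.updateRow_ne hl, hB,
        Matrix.add_apply, Matrix.smul_apply, Matrix.map_apply, Matrix.map_apply]
  -- piecewise evaluation
  have hpiece : ∀ (M : Matrix (Fin n) (Fin n) ℂ) (s : Finset (Fin n)), j ∉ s →
      Matrix.det (Matrix.of (s.piecewise D M)) = M.pminor sᶜ := by
    intro M s hjs
    have hps : (s.piecewise D M : Fin n → Fin n → ℂ)
        = s.piecewise (1 : Matrix (Fin n) (Fin n) ℂ) M := by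
      funext l
      by_cases hl : l ∈ s
      · erw [Finset.piecewise_eq_of_mem _ _ _ hl, Finset.piecewise_eq_of_mem _ _ _ hl, hD,
          Matrix.updateRow_ne (fun h : l = j => hjs (by rw [← h]; exact hl))]
      · erw [Finset.piecewise_eq_of_notMem _ _ _ hl, Finset.piecewise_eq_of_notMem _ _ _ hl]
    rw [show Matrix.of (s.piecewise D M)
        = Matrix.of (s.piecewise (1 : Matrix (Fin n) (Fin n) ℂ) M) from congrArg _ hps,
      det_piecewise_one', det_sub_compl]
    rfl
  have hpiece0 : ∀ (M : Matrix (Fin n) (Fin n) ℂ) (s : Finset (Fin n)), j ∈ s →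
      Matrix.det (Matrix.of (s.piecewise D M)) = 0 := by
    intro M s hjs
    apply Matrix.det_eq_zero_of_row_eq_zero j
    intro k
    show (s.piecewise D M) j k = 0
    erw [Finset.piecewise_eq_of_mem _ _ _ hjs, hD, Matrix.updateRow_self]
    rfl
  -- coefficients of the two numerator-type determinants
  have hcoeff_main : ∀ (c : Fin n → ℂ) (k : ℕ),
      ((B.updateRow j (fun l => C (c l))).det).coeff k
        = ∑ s ∈ Finset.univ.filter
            (fun s : Finset (Fin n) => s.card = k ∧ j ∈ sᶜ),
            ((A * A).updateRow j c).pminor sᶜ := by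
    intro c k
    rw [hrowgen c, det_map_add_X_smul, coeff_sum_X_pow_card]
    have hsub : Finset.univ.filter (fun s : Finset (Fin n) => s.card = k ∧ j ∈ sᶜ)
        ⊆ Finset.univ.filter (fun s : Finset (Fin n) => s.card = k) := by
      intro s hs
      rw [Finset.mem_filter] at hs ⊢
      exact ⟨hs.1, hs.2.1⟩
    rw [← Finset.sum_subset hsub]
    · refine Finset.sum_congr rfl ?_
      intro s hs
      rw [Finset.mem_filter] at hs
      exact hpiece _ s (by simpa using hs.2.2)
    · intro s hs hns
      rw [Finset.mem_filter] at hs hns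
      apply hpiece0
      by_contra hjs
      exact hns ⟨hs.1, hs.2, by simpa using hjs⟩
  have hqcoeff : ∀ k : ℕ, (B.det).coeff k = ∑ s ∈ Finset.univ.filter
      (fun s : Finset (Fin n) => s.card = k), (A * A).pminor sᶜ := by
    intro k
    rw [hB, det_map_add_X_smul, coeff_sum_X_pow_card]
    refine Finset.sum_congr rfl ?_
    intro s _
    rw [det_piecewise_one', det_sub_compl]
    rfl
  set d : ℂ := ∑ α ∈ Finset.powersetCard r (Finset.univ : Finset (Fin n)),
    (A * A).pminor α with hd_def
  have hqd : (B.det).coeff (n - r) = d := by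
    rw [hqcoeff, hd_def]
    exact sum_card_compl hrn _
  -- the key polynomial identity
  have hmapA : A.map C = (G.map C) * ((A * A).map C) := by
    rw [← Matrix.map_mul, hGA2]
  have hA2B : (A * A).map C = B - (Polynomial.X : ℂ[X]) • (1 : Matrix (Fin n) (Fin n) ℂ[X]) := by
    rw [hB, hmap1, add_sub_cancel_right]
  have hkey : A.map C * B.adjugate
      = B.det • (G.map C) - (Polynomial.X : ℂ[X]) • (G.map C * B.adjugate) := by
    calc A.map C * B.adjugate = G.map C * ((A * A).map C * B.adjugate) := by
          rw [hmapA, mul_assoc]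
      _ = G.map C * ((B - (Polynomial.X : ℂ[X]) • 1) * B.adjugate) := by rw [← hA2B]
      _ = G.map C * (B.det • 1 - (Polynomial.X : ℂ[X]) • B.adjugate) := by
          rw [sub_mul, Matrix.mul_adjugate, smul_mul_assoc, one_mul]
      _ = B.det • G.map C - (Polynomial.X : ℂ[X]) • (G.map C * B.adjugate) := by
          rw [mul_sub, mul_smul_comm, mul_smul_comm, mul_one]
  have hpADJ : (B.updateRow j (fun l => C (A i l))).det = (A.map C * B.adjugate) i j := by
    rw [det_updateRow_eq_sum_adjugate, Matrix.mul_apply]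
    rfl
  have hgADJ : (B.updateRow j (fun l => C (G i l))).det = (G.map C * B.adjugate) i j := by
    rw [det_updateRow_eq_sum_adjugate, Matrix.mul_apply]
    rfl
  have hpqg : (B.updateRow j (fun l => C (A i l))).det
      = B.det * C (G i j) - Polynomial.X * (B.updateRow j (fun l => C (G i l))).det := by
    rw [hpADJ, hgADJ, hkey]
    rw [Matrix.sub_apply, Matrix.smul_apply, Matrix.smul_apply, Matrix.map_apply,
      smul_eq_mul, smul_eq_mul]
  -- coefficient of the numerator polynomial
  have hnum : ((B.updateRow j (fun l => C (A i l))).det).coeff (n - r)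
      = ∑ α ∈ (Finset.powersetCard r (Finset.univ : Finset (Fin n))).filter
          (fun α => j ∈ α), ((A * A).updateRow j (A i)).pminor α := by
    rw [hcoeff_main (A i) (n - r)]
    exact sum_filter_card_compl hrn _ (fun α => j ∈ α)
  -- the lower coefficient of the correction term vanishes
  have hXg : (Polynomial.X * (B.updateRow j (fun l => C (G i l))).det).coeff (n - r) = 0 := by
    rcases Nat.eq_zero_or_pos (n - r) with h0 | hpos
    · rw [h0, Polynomial.mul_coeff_zero, Polynomial.coeff_X_zero, zero_mul]
    · obtain ⟨m, hm⟩ : ∃ m, n - r = m + 1 := ⟨n - r - 1, by omega⟩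
      rw [hm, Polynomial.coeff_X_mul, hcoeff_main (G i) m]
      refine Finset.sum_eq_zero ?_
      intro s hs
      rw [Finset.mem_filter] at hs
      have hGrow : ((A * A).updateRow j (G i) : Matrix (Fin n) (Fin n) ℂ).pminor sᶜ = 0 := by
        apply pminor_eq_zero_of_rows _ (RS (A * A)) ?_ _ ?_
        · intro l
          by_cases hl : l = j
          · subst hl
            rw [Matrix.updateRow_self]
            have hmem := row_mul_mem_RS (G * G * G) (A * A) i
            rwa [hG3A2] at hmem
          · rw [Matrix.updateRow_ne hl]
            exact row_mem_RS _ l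
        · have hsc : s.card = m := hs.2.1
          have hscle : s.card ≤ n := by
            have := Finset.card_le_univ s
            simpa using this
          refine lt_of_le_of_lt hVA2 ?_
          rw [Finset.card_compl, Fintype.card_fin, hsc]
          omega
      exact hGrow
  -- d is nonzero : factor the characteristic-type polynomial
  have hfact : ((A * A).map C + (Polynomial.X : ℂ[X]) • E.map C + (1 - E).map C)
      * (E.map C + (Polynomial.X : ℂ[X]) • (1 - E).map C) = B := by
    have m1 : (A * A).map C * E.map C = (A * A).map C := by rw [← Matrix.map_mul, hA2E]
    have m2 : (A * A).map C * (1 - E).map C = 0 := by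
      rw [← Matrix.map_mul]
      have h0 : (A * A) * (1 - E) = 0 := by rw [mul_sub, mul_one, hA2E, sub_self]
      rw [h0]
      exact Matrix.map_zero _ (map_zero C)
    have m3 : E.map C * E.map C = E.map C := by rw [← Matrix.map_mul, hEE]
    have m4 : E.map C * (1 - E).map C = 0 := by
      rw [← Matrix.map_mul]
      have h0 : E * (1 - E) = 0 := by rw [mul_sub, mul_one, hEE, sub_self]
      rw [h0]
      exact Matrix.map_zero _ (map_zero C)
    have m5 : (1 - E).map C * E.map C = 0 := by
      rw [← Matrix.map_mul]
      have h0 : (1 - E) * E = 0 := by rw [sub_mul, one_mul, hEE, sub_self]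
      rw [h0]
      exact Matrix.map_zero _ (map_zero C)
    have m6 : (1 - E).map C * (1 - E).map C = (1 - E).map C := by
      rw [← Matrix.map_mul]
      have h0 : (1 - E) * (1 - E) = 1 - E := by
        rw [sub_mul, one_mul, mul_sub, mul_one, hEE]
        abel
      rw [h0]
    have m7 : E.map C + (1 - E).map C = (1 : Matrix (Fin n) (Fin n) ℂ[X]) := by
      rw [← hmapadd]
      have h0 : E + (1 - E) = (1 : Matrix (Fin n) (Fin n) ℂ) := by abel
      rw [h0, hmap1]
    calc ((A * A).map C + (Polynomial.X : ℂ[X]) • E.map C + (1 - E).map C)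
        * (E.map C + (Polynomial.X : ℂ[X]) • (1 - E).map C)
        = ((A * A).map C * E.map C + (Polynomial.X : ℂ[X]) • ((A * A).map C * (1 - E).map C))
          + ((Polynomial.X : ℂ[X]) • (E.map C * E.map C)
            + ((Polynomial.X : ℂ[X]) * (Polynomial.X : ℂ[X])) • (E.map C * (1 - E).map C))
          + ((1 - E).map C * E.map C + (Polynomial.X : ℂ[X]) • ((1 - E).map C * (1 - E).map C)) := by
          simp only [add_mul, mul_add, smul_mul_assoc, mul_smul_comm, smul_add, smul_smul]
          abel
      _ = B := by
          rw [m1, m2, m3, m4, m5, m6, hB, hmap1, ← m7, smul_add, smul_zero, smul_zero]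
          abel
  have hqfact : B.det = ((A * A).map C + (Polynomial.X : ℂ[X]) • E.map C + (1 - E).map C).det
      * (E.map C + (Polynomial.X : ℂ[X]) • (1 - E).map C).det := by
    rw [← Matrix.det_mul, hfact]
  -- v = X ^ (n - r)
  have hvterm : ∀ s : Finset (Fin n), s.card ≠ n - r →
      Matrix.det (Matrix.of (s.piecewise (1 - E) E)) = 0 := by
    intro s hsc
    rcases lt_or_gt_of_ne hsc with hlt | hgt
    · apply det_eq_zero_of_rows_mem _ sᶜ (RS E)
      · intro l hl
        rw [Finset.mem_compl] at hl
        show (s.piecewise (1 - E) E) l ∈ _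
        erw [Finset.piecewise_eq_of_notMem _ _ _ hl]
        exact row_mem_RS E l
      · refine lt_of_le_of_lt hVE ?_
        rw [Finset.card_compl, Fintype.card_fin]
        omega
    · apply det_eq_zero_of_rows_mem _ s (RS (1 - E))
      · intro l hl
        show (s.piecewise (1 - E) E) l ∈ _
        erw [Finset.piecewise_eq_of_mem _ _ _ hl]
        exact row_mem_RS _ l
      · exact lt_of_le_of_lt hVF hgt
  have hv : (E.map C + (Polynomial.X : ℂ[X]) • (1 - E).map C).det
      = (Polynomial.X : ℂ[X]) ^ (n - r) := by
    have hvsum : (E.map C + (Polynomial.X : ℂ[X]) • (1 - E).map C).det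
        = (Polynomial.X : ℂ[X]) ^ (n - r) *
          C (∑ s ∈ Finset.univ.filter (fun s : Finset (Fin n) => s.card = n - r),
            Matrix.det (Matrix.of (s.piecewise (1 - E) E))) := by
      rw [det_map_add_X_smul]
      rw [← Finset.sum_subset (Finset.filter_subset
        (fun s : Finset (Fin n) => s.card = n - r) Finset.univ)]
      · rw [map_sum, Finset.mul_sum]
        refine Finset.sum_congr rfl ?_
        intro s hs
        rw [Finset.mem_filter] at hs
        rw [hs.2]; rfl
      · intro s _ hns
        rw [Finset.mem_filter] at hns
        have : s.card ≠ n - r := fun h => hns ⟨Finset.mem_univ _, h⟩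
        erw [hvterm s this, map_zero, mul_zero]
    have hev1 : Polynomial.eval 1 ((E.map C + (Polynomial.X : ℂ[X]) • (1 - E).map C).det) = 1 := by
      have h := RingHom.map_det (Polynomial.evalRingHom (1 : ℂ))
        (E.map C + (Polynomial.X : ℂ[X]) • (1 - E).map C)
      have hmm : (Polynomial.evalRingHom (1 : ℂ)).mapMatrix
          (E.map C + (Polynomial.X : ℂ[X]) • (1 - E).map C) = (1 : Matrix (Fin n) (Fin n) ℂ) := by
        ext l k
        simp [RingHom.mapMatrix_apply, Matrix.map_apply, Matrix.add_apply, Matrix.smul_apply,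
          Matrix.sub_apply, Matrix.one_apply, smul_eq_mul, apply_ite (Polynomial.eval (1 : ℂ))]
      rw [hmm, Matrix.det_one] at h
      exact h
    rw [hvsum] at hev1 ⊢
    simp only [Polynomial.eval_mul, Polynomial.eval_pow, Polynomial.eval_X, Polynomial.eval_C,
      one_pow, one_mul] at hev1
    rw [hev1, Polynomial.C_1, mul_one]
  -- coefficient 0 of u
  have hu0 : (((A * A).map C + (Polynomial.X : ℂ[X]) • E.map C + (1 - E).map C).det).coeff 0
      = Matrix.det (A * A + (1 - E)) := by
    rw [Polynomial.coeff_zero_eq_eval_zero]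
    have h := RingHom.map_det (Polynomial.evalRingHom (0 : ℂ))
      ((A * A).map C + (Polynomial.X : ℂ[X]) • E.map C + (1 - E).map C)
    have hmm : (Polynomial.evalRingHom (0 : ℂ)).mapMatrix
        ((A * A).map C + (Polynomial.X : ℂ[X]) • E.map C + (1 - E).map C)
        = A * A + (1 - E) := by
      ext l k
      simp [RingHom.mapMatrix_apply, Matrix.map_apply, Matrix.add_apply, Matrix.smul_apply,
        Matrix.sub_apply, Matrix.one_apply, smul_eq_mul, apply_ite (Polynomial.eval (0 : ℂ)), -Matrix.map_mul]
    rw [hmm] at h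
    exact h
  have hdet_ne : Matrix.det (A * A + (1 - E)) ≠ 0 := by
    intro h
    have e1 : A * A + (1 - E) = A * A + 1 - E := by abel
    have e2 : G * G + (1 - E) = G * G + 1 - E := by abel
    have h11 : (A * A + (1 - E)) * (G * G + (1 - E)) = 1 := by rw [e1, e2]; exact hinv
    have hdet := congrArg Matrix.det h11
    rw [Matrix.det_mul, h, zero_mul, Matrix.det_one] at hdet
    exact zero_ne_one hdet
  have hdne : d ≠ 0 := by
    have hd0 : d = (((A * A).map C + (Polynomial.X : ℂ[X]) • E.map C
        + (1 - E).map C).det).coeff 0 := by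
      rw [← hqd, hqfact, hv]
      have hcm := Polynomial.coeff_mul_X_pow
        (((A * A).map C + (Polynomial.X : ℂ[X]) • E.map C + (1 - E).map C).det) (n - r) 0
      rw [zero_add] at hcm
      rw [hcm]
    rw [hd0, hu0]
    exact hdet_ne
  -- assemble everything
  have hfin : (∑ α ∈ (Finset.powersetCard r (Finset.univ : Finset (Fin n))).filter
      (fun α => j ∈ α), ((A * A).updateRow j (A i)).pminor α) = d * G i j := by
    have hc := congrArg (fun pp : ℂ[X] => pp.coeff (n - r)) hpqg
    rw [Polynomial.coeff_sub, Polynomial.coeff_mul_C, hqd, hXg, sub_zero] at hc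
    exact hnum.symm.trans hc
  have hgoal : ((A * A).updateRow j (fun l => A i l)) = ((A * A).updateRow j (A i)) := rfl
  rw [hgoal, hfin, mul_comm, mul_div_assoc, div_self hdne, mul_one]

end Master

/-- Determinantal representations of the group inverse `X = A^g`
(characterized by `AXA = A`, `XAX = X`, `AX = XA`) of `A ∈ ℂ^{n×n}` with `Ind A = 1`
and `rank A² = rank A = r ≤ n`. -/
theorem groupInverse_entry_det_repr
    (n r : ℕ) (A : Matrix (Fin n) (Fin n) ℂ)
    (hInd : IsLeast {j : ℕ | (A ^ (j + 1)).rank = (A ^ j).rank} 1)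
    (hr1 : (A ^ 2).rank = r) (hr2 : A.rank = r) (hrn : r ≤ n)
    (X : Matrix (Fin n) (Fin n) ℂ)
    (h1 : A * X * A = A) (h2 : X * A * X = X) (h3 : A * X = X * A)
    (i j : Fin n) :
    X i j =
      (∑ α ∈ (Finset.powersetCard r (Finset.univ : Finset (Fin n))).filter
          (fun α => j ∈ α),
        ((A ^ 2).updateRow j (fun l => A i l)).pminor α) /
      (∑ α ∈ Finset.powersetCard r (Finset.univ : Finset (Fin n)),
        (A ^ 2).pminor α) ∧
    X i j =
      (∑ β ∈ (Finset.powersetCard r (Finset.univ : Finset (Fin n))).filter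
          (fun β => i ∈ β),
        ((A ^ 2).updateCol i (fun l => A l j)).pminor β) /
      (∑ β ∈ Finset.powersetCard r (Finset.univ : Finset (Fin n)),
        (A ^ 2).pminor β) := by
  constructor
  · exact master_row n r A X hr2 hrn h1 h2 h3 i j
  · -- apply the row version to the transposed matrices
    have hr2T : Aᵀ.rank = r := by rw [Matrix.rank_transpose]; exact hr2
    have h1T : Aᵀ * Xᵀ * Aᵀ = Aᵀ := by
      rw [← Matrix.transpose_mul, ← Matrix.transpose_mul, ← mul_assoc, h1]
    have h2T : Xᵀ * Aᵀ * Xᵀ = Xᵀ := by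
      rw [← Matrix.transpose_mul, ← Matrix.transpose_mul, ← mul_assoc, h2]
    have h3T : Aᵀ * Xᵀ = Xᵀ * Aᵀ := by
      rw [← Matrix.transpose_mul, ← Matrix.transpose_mul, h3]
    have hm := master_row n r Aᵀ Xᵀ hr2T hrn h1T h2T h3T j i
    have hXT : Xᵀ j i = X i j := rfl
    have hT2 : (Aᵀ) ^ 2 = (A ^ 2)ᵀ := by
      rw [pow_two, pow_two, ← Matrix.transpose_mul]
    have hpm : ∀ (M : Matrix (Fin n) (Fin n) ℂ) (β : Finset (Fin n)),
        (Mᵀ).pminor β = M.pminor β := by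
      intro M β
      unfold Matrix.pminor
      rw [← Matrix.transpose_submatrix, Matrix.det_transpose]
    have hupd : ((Aᵀ) ^ 2).updateRow i (fun l => Aᵀ j l)
        = ((A ^ 2).updateCol i (fun l => A l j))ᵀ := by
      rw [hT2]
      rw [Matrix.updateRow_transpose]
      rfl
    rw [hXT, hupd] at hm
    rw [hm]
    congr 1
    · exact Finset.sum_congr rfl (fun β _ => hpm _ β)
    · rw [hT2]
      exact Finset.sum_congr rfl (fun β _ => hpm _ β)
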